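/- arXiv:2308.01242 — 3 statements merged into one kernel-verified Lean document; each statement's English description precedes it below -/
import Mathlib

section
/- K̃_k is a minor of G̃ if and only if K_k is a minor of G. -/
/-- A signed (multi)graph: an edge set with endpoints (an unordered pair,
possibly a loop) and a sign for each edge (`neg e = true` means `e` is negative). -/
structure SGraph (V : Type) where
  E : Type
  ends : E → Sym2 V
  neg : E → Bool

namespace SGraph

variable {V W : Type}

/-- Walks in a signed multigraph, recorded as sequences of edges. -/
inductive Walk (G : SGraph V) : V → V → Type where
  | nil {v : V} : Walk G v v
  | cons {u v w : V} (e : G.E) (h : G.ends e = s(u, v)) (p : Walk G v w) : Walk G u w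

namespace Walk

variable {G : SGraph V}

/-- The list of edges of a walk. -/
def edges : {u v : V} → G.Walk u v → List G.E
  | _, _, .nil => []
  | _, _, .cons e _ p => e :: p.edges

/-- The list of vertices visited by a walk (in order, with repetitions). -/
def support : {u v : V} → G.Walk u v → List V
  | u, _, .nil => [u]
  | u, _, .cons _ _ p => u :: p.support

/-- A walk is negative if it uses an odd number of negative edges
(its sign, the product of the signs of its edges with multiplicity, is `-1`). -/
def isNeg {u v : V} (p : G.Walk u v) : Bool :=
  (p.edges.map G.neg).foldr Bool.xor false

/-- A closed walk is a cycle if it has at least one edge, no repeated edge,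
and no repeated vertex (except the initial vertex which is also final). -/
def IsCycle {v : V} (p : G.Walk v v) : Prop :=
  p.edges ≠ [] ∧ p.edges.Nodup ∧ p.support.tail.Nodup

/-- The internal vertices of a walk. -/
def inner {u v : V} (p : G.Walk u v) : List V :=
  p.support.tail.dropLast

end Walk

/-- A set of vertices is balanced if it induces no negative cycle. -/
def BalancedSet (G : SGraph V) (X : Set V) : Prop :=
  ∀ (v : V) (p : G.Walk v v), p.IsCycle → (∀ u ∈ p.support, u ∈ X) → p.isNeg = false

/-- A signed graph is balanced if it contains no negative cycle. -/
def IsBalanced (G : SGraph V) : Prop := G.BalancedSet Set.univ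

/-- The signed graph has a negative loop. -/
def HasNegLoop (G : SGraph V) : Prop :=
  ∃ e : G.E, (∃ v : V, G.ends e = s(v, v)) ∧ G.neg e = true

/-- The signed graph has a positive loop. -/
def HasPosLoop (G : SGraph V) : Prop :=
  ∃ e : G.E, (∃ v : V, G.ends e = s(v, v)) ∧ G.neg e = false

/-- A balanced `k`-coloring: a partition of the vertices into `k` balanced color classes. -/
def ColorableB (G : SGraph V) (k : ℕ) : Prop :=
  ∃ c : V → Fin k, ∀ i : Fin k, G.BalancedSet {v | c v = i}

/-- The balanced chromatic number. -/
noncomputable def chromNumB (G : SGraph V) : ℕ∞ :=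
  ⨅ n ∈ {n : ℕ | G.ColorableB n}, (n : ℕ∞)

/-- Switching at the set of vertices where `s` is `true`: the sign of an edge is
multiplied by `-1` once for each of its endpoints (with multiplicity) in the set;
thus an edge with exactly one endpoint in the set changes sign, and loops are unchanged. -/
def switch (G : SGraph V) (s : V → Bool) : SGraph V where
  E := G.E
  ends := G.ends
  neg e := Bool.xor (G.neg e)
    (Sym2.lift ⟨fun u v => Bool.xor (s u) (s v), fun u v => Bool.xor_comm _ _⟩ (G.ends e))

/-- The negation of a signature. -/
def negate (G : SGraph V) : SGraph V where
  E := G.E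
  ends := G.ends
  neg e := !(G.neg e)

/-- A set of vertices is connected via positive edges inside itself. -/
def PosConnected (G : SGraph V) (B : Set V) : Prop :=
  B.Nonempty ∧ ∀ u ∈ B, ∀ v ∈ B, ∃ p : G.Walk u v,
    (∀ x ∈ p.support, x ∈ B) ∧ ∀ e ∈ p.edges, G.neg e = false

/-- `H` is a minor of `G`: after a suitable switching of `G`, there are disjoint
branch sets (each connected via positive edges) for the vertices of `H`, and
distinct edges of `G`, with the correct signs, realizing the edges of `H`. -/
def IsMinor (H : SGraph W) (G : SGraph V) : Prop :=
  ∃ s : V → Bool, ∃ B : W → Set V,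
    (∀ x : W, (G.switch s).PosConnected (B x)) ∧
    (Pairwise fun x y => Disjoint (B x) (B y)) ∧
    ∃ η : H.E → G.E, Function.Injective η ∧
      ∀ (e : H.E) (x y : W), H.ends e = s(x, y) →
        (G.switch s).neg (η e) = H.neg e ∧
        ∃ u v : V, G.ends (η e) = s(u, v) ∧ u ∈ B x ∧ v ∈ B y

/-- A homomorphism of signed graphs: after a suitable switching of the source,
a map of vertices and edges preserving incidences and signs. -/
def HomTo (G : SGraph V) (H : SGraph W) : Prop :=
  ∃ s : V → Bool, ∃ f : V → W, ∃ g : G.E → H.E,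
    ∀ (e : G.E) (u v : V), G.ends e = s(u, v) →
      H.ends (g e) = s(f u, f v) ∧ H.neg (g e) = (G.switch s).neg e

/-- A subdivision of `H` is isomorphic to a subgraph of `G` (signs ignored):
an injection of the vertices of `H` together with internally disjoint,
edge-disjoint paths of `G` realizing the edges of `H`. -/
def IsSubdivisionOf (H : SGraph W) (G : SGraph V) : Prop :=
  ∃ (φ : W → V) (ep : H.E → W × W),
    Function.Injective φ ∧
    (∀ e : H.E, H.ends e = s((ep e).1, (ep e).2)) ∧
    ∃ P : (e : H.E) → G.Walk (φ (ep e).1) (φ (ep e).2),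
      (∀ e, (P e).support.Nodup) ∧
      (∀ e f, e ≠ f → ∀ x ∈ (P e).inner, x ∉ (P f).support) ∧
      (∀ e, ∀ x ∈ (P e).inner, x ∉ Set.range φ) ∧
      (∀ e f, e ≠ f → ∀ g ∈ (P e).edges, g ∉ (P f).edges)

/-- `H` is a total topological minor of `G`: a subdivision of `H` occurs as a
subgraph of `G` in which the path representing each edge `e` of `H` has sign
exactly the sign of `e`. -/
def IsTotalTopMinor (H : SGraph W) (G : SGraph V) : Prop :=
  ∃ (φ : W → V) (ep : H.E → W × W),
    Function.Injective φ ∧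
    (∀ e : H.E, H.ends e = s((ep e).1, (ep e).2)) ∧
    ∃ P : (e : H.E) → G.Walk (φ (ep e).1) (φ (ep e).2),
      (∀ e, (P e).support.Nodup) ∧
      (∀ e f, e ≠ f → ∀ x ∈ (P e).inner, x ∉ (P f).support) ∧
      (∀ e, ∀ x ∈ (P e).inner, x ∉ Set.range φ) ∧
      (∀ e f, e ≠ f → ∀ g ∈ (P e).edges, g ∉ (P f).edges) ∧
      (∀ e, (P e).isNeg = H.neg e)

/-- `H` is a topological minor of `G`: some subdivision of `H` occurs as a subgraph
of `G` in which every cycle of `H` keeps its sign; equivalently, after a suitable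
switching of `H`, `H` is a total topological minor of `G`. -/
def IsTopMinor (H : SGraph W) (G : SGraph V) : Prop :=
  ∃ s : W → Bool, (H.switch s).IsTotalTopMinor G

end SGraph

open SGraph

/-- The signed graph `G̃` obtained from a graph `G` by replacing each edge by a
pair of parallel edges, one positive and one negative. -/
def SimpleGraph.tildeS {V : Type} (G : SimpleGraph V) : SGraph V where
  E := G.edgeSet × Bool
  ends e := (e.1 : Sym2 V)
  neg e := e.2

/-- The all-negative signed graph `(G, -)` on a graph `G`. -/
def SimpleGraph.allNeg {V : Type} (G : SimpleGraph V) : SGraph V where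
  E := G.edgeSet
  ends e := (e : Sym2 V)
  neg _ := true

/-- `K̃_k`: the signed graph on `k` vertices with a positive and a negative edge
between each pair of distinct vertices. -/
def tildeK (k : ℕ) : SGraph (Fin k) := (⊤ : SimpleGraph (Fin k)).tildeS

/-- `(K_k, -)`: the all-negative complete signed graph on `k` vertices. -/
def allNegK (k : ℕ) : SGraph (Fin k) := (⊤ : SimpleGraph (Fin k)).allNeg

/-- `K̃_k⁺`: as `K̃_k`, with in addition a positive loop at every vertex. -/
def tildeKplus (k : ℕ) : SGraph (Fin k) where
  E := ((⊤ : SimpleGraph (Fin k)).edgeSet × Bool) ⊕ Fin k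
  ends := Sum.elim (fun e => (e.1 : Sym2 (Fin k))) (fun i => s(i, i))
  neg := Sum.elim (fun e => e.2) (fun _ => false)

/-- `G` has a `K_k`-minor: `k` disjoint connected branch sets, pairwise joined by an edge. -/
def SimpleGraph.HasCliqueMinor {V : Type} (G : SimpleGraph V) (k : ℕ) : Prop :=
  ∃ T : Fin k → G.Subgraph,
    (∀ i, (T i).coe.Connected) ∧
    (Pairwise fun i j => Disjoint (T i).verts (T j).verts) ∧
    ∀ i j, i ≠ j → ∃ u v, G.Adj u v ∧ u ∈ (T i).verts ∧ v ∈ (T j).verts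

/-- `G` has an odd-`K_k`-minor: a 2-coloring of the vertices together with `k`
disjoint trees, all of whose edges are properly colored, pairwise joined by a
monochromatic edge. -/
def SimpleGraph.HasOddCliqueMinor {V : Type} (G : SimpleGraph V) (k : ℕ) : Prop :=
  ∃ c : V → Bool, ∃ T : Fin k → G.Subgraph,
    (∀ i, (T i).coe.IsTree) ∧
    (Pairwise fun i j => Disjoint (T i).verts (T j).verts) ∧
    (∀ i, ∀ u v, (T i).Adj u v → c u ≠ c v) ∧
    ∀ i j, i ≠ j →
      ∃ u v, G.Adj u v ∧ u ∈ (T i).verts ∧ v ∈ (T j).verts ∧ c u = c v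

/-- `G` has an even-odd-`K_k`-minor: as an odd-`K_k`-minor, with in addition a
properly colored edge between each pair of distinct trees. -/
def SimpleGraph.HasEvenOddCliqueMinor {V : Type} (G : SimpleGraph V) (k : ℕ) : Prop :=
  ∃ c : V → Bool, ∃ T : Fin k → G.Subgraph,
    (∀ i, (T i).coe.IsTree) ∧
    (Pairwise fun i j => Disjoint (T i).verts (T j).verts) ∧
    (∀ i, ∀ u v, (T i).Adj u v → c u ≠ c v) ∧
    ∀ i j, i ≠ j →
      (∃ u v, G.Adj u v ∧ u ∈ (T i).verts ∧ v ∈ (T j).verts ∧ c u = c v) ∧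
      (∃ u v, G.Adj u v ∧ u ∈ (T i).verts ∧ v ∈ (T j).verts ∧ c u ≠ c v)

/-- The fractional chromatic number of a finite graph: the infimum total weight of
a system of nonnegative weights on independent sets covering every vertex with
total weight at least 1. -/
noncomputable def SimpleGraph.fracChrom {V : Type} [Fintype V] [DecidableEq V]
    (G : SimpleGraph V) : ℝ :=
  sInf {r : ℝ | ∃ w : Finset V → ℝ, (∀ A, 0 ≤ w A) ∧
    (∀ A : Finset V, w A ≠ 0 → (∀ u ∈ A, ∀ v ∈ A, ¬G.Adj u v)) ∧
    (∀ v : V, 1 ≤ ∑ A : Finset V, if v ∈ A then w A else 0) ∧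
    ∑ A : Finset V, w A ≤ r}

/-- The fractional balanced chromatic number of a finite signed graph: the infimum
total weight of a system of nonnegative weights on balanced sets covering every
vertex with total weight at least 1. -/
noncomputable def SGraph.fracChromB {V : Type} [Fintype V] [DecidableEq V]
    (G : SGraph V) : ℝ :=
  sInf {r : ℝ | ∃ w : Finset V → ℝ, (∀ A, 0 ≤ w A) ∧
    (∀ A : Finset V, w A ≠ 0 → G.BalancedSet ↑A) ∧
    (∀ v : V, 1 ≤ ∑ A : Finset V, if v ∈ A then w A else 0) ∧
    ∑ A : Finset V, w A ≤ r}

lemma SGraph.Walk.start_mem_support {V : Type} {G : SGraph V} :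
    ∀ {u v : V} (p : G.Walk u v), u ∈ p.support
  | _, _, .nil => by simp [SGraph.Walk.support]
  | _, _, .cons e h p => by simp [SGraph.Walk.support]

lemma mem_eq_of_pairwise_disjoint {ι V : Type*} {B : ι → Set V}
    (h : Pairwise fun x y => Disjoint (B x) (B y)) {i j : ι} {x : V}
    (hi : x ∈ B i) (hj : x ∈ B j) : i = j := by
  by_contra hne
  exact (h hne).le_bot ⟨hi, hj⟩

lemma reachable_of_sgraph_walk {V : Type} {G : SimpleGraph V} {s : V → Bool} {B : Set V} :
    ∀ {u v : V} (p : ((G.tildeS).switch s).Walk u v),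
      (∀ x ∈ p.support, x ∈ B) → ∀ (hu : u ∈ B) (hv : v ∈ B),
      ((⊤ : G.Subgraph).induce B).coe.Reachable ⟨u, hu⟩ ⟨v, hv⟩
  | _, _, .nil, _, _, _ => SimpleGraph.Reachable.refl _
  | u, v, .cons (v := w) e h q, hsup, hu, hv => by
    have hw : w ∈ B := by
      apply hsup
      simp only [SGraph.Walk.support, List.mem_cons]
      exact Or.inr q.start_mem_support
    have hends : (e.1 : Sym2 _) = s(u, w) := h
    have hadj : G.Adj u w := by
      have := e.1.2
      rw [hends] at this
      exact this
    have hstep : ((⊤ : G.Subgraph).induce B).coe.Adj ⟨u, hu⟩ ⟨w, hw⟩ := by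
      simp [SimpleGraph.Subgraph.induce_adj, hu, hw, hadj]
    exact hstep.reachable.trans
      (reachable_of_sgraph_walk q (fun x hx => hsup x (by
        simp only [SGraph.Walk.support, List.mem_cons]; exact Or.inr hx)) hw hv)

lemma exists_sgraph_walk {V : Type} {G : SimpleGraph V} {T : G.Subgraph}
    {a b : T.verts} (p : T.coe.Walk a b) :
    ∃ q : ((G.tildeS).switch (fun _ => false)).Walk a.1 b.1,
      (∀ x ∈ q.support, x ∈ T.verts) ∧
      ∀ e ∈ q.edges, ((G.tildeS).switch (fun _ => false)).neg e = false := by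
  induction p with
  | nil =>
    exact ⟨.nil, by simp [SGraph.Walk.support, a.2], by simp [SGraph.Walk.edges]⟩
  | @cons a c b h p ih =>
    obtain ⟨q, hq1, hq2⟩ := ih
    have hadj : G.Adj a.1 c.1 := T.adj_sub h
    refine ⟨.cons (⟨⟨s(a.1, c.1), hadj⟩, false⟩ : G.edgeSet × Bool) rfl q, ?_, ?_⟩
    · intro x hx
      simp only [SGraph.Walk.support, List.mem_cons] at hx
      rcases hx with rfl | hx
      · exact a.2
      · exact hq1 x hx
    · intro e he
      change e ∈ _ :: q.edges at he
      rcases List.mem_cons.mp he with rfl | he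
      · simp [SGraph.switch, SimpleGraph.tildeS]
      · exact hq2 e he

/-- `K̃_k` is a minor of `G̃` iff `K_k` is a minor of `G`. -/
theorem stmt11 {V : Type} (G : SimpleGraph V) (k : ℕ) :
    (tildeK k).IsMinor G.tildeS ↔ G.HasCliqueMinor k := by
  constructor
  · rintro ⟨s, B, hconn, hdisj, η, hinj, hη⟩
    refine ⟨fun i => (⊤ : G.Subgraph).induce (B i), ?_, hdisj, ?_⟩
    · intro i
      obtain ⟨⟨x, hx⟩, hwalks⟩ := hconn i
      rw [SimpleGraph.connected_iff]
      refine ⟨?_, ⟨⟨x, hx⟩⟩⟩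
      rintro ⟨a, ha⟩ ⟨b, hb⟩
      obtain ⟨p, hps, -⟩ := hwalks a ha b hb
      exact reachable_of_sgraph_walk p hps ha hb
    · intro i j hne
      have hij : s(i, j) ∈ (⊤ : SimpleGraph (Fin k)).edgeSet := by
        simpa using hne
      obtain ⟨-, u, v, hends, huB, hvB⟩ :=
        hη (⟨⟨s(i, j), hij⟩, false⟩ : ((⊤ : SimpleGraph (Fin k)).edgeSet × Bool)) i j rfl
      have hadj : G.Adj u v := by
        have h2 := (η (⟨⟨s(i, j), hij⟩, false⟩ :
          ((⊤ : SimpleGraph (Fin k)).edgeSet × Bool))).1.2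
        have : (G.tildeS).ends (η ⟨⟨s(i, j), hij⟩, false⟩) = s(u, v) := hends
        rw [show ((G.tildeS).ends (η ⟨⟨s(i, j), hij⟩, false⟩)) =
          ((η ⟨⟨s(i, j), hij⟩, false⟩).1 : Sym2 V) from rfl] at this
        rw [this] at h2
        exact h2
      exact ⟨u, v, hadj, huB, hvB⟩
  · rintro ⟨T, hconn, hdisj, hedge⟩
    have key : ∀ e : (tildeK k).E, ∃ (i j : Fin k) (u v : V),
        (e.1 : Sym2 (Fin k)) = s(i, j) ∧ G.Adj u v ∧
        u ∈ (T i).verts ∧ v ∈ (T j).verts := by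
      rintro ⟨⟨z, hz⟩, b⟩
      induction z using Sym2.ind with
      | _ i j =>
        have hne : i ≠ j := by simpa using hz
        obtain ⟨u, v, hadj, hu, hv⟩ := hedge i j hne
        exact ⟨i, j, u, v, rfl, hadj, hu, hv⟩
    choose pi pj pu pv hij hadj hu hv using key
    refine ⟨fun _ => false, fun i => (T i).verts, ?_, hdisj, ?_⟩
    · intro i
      refine ⟨?_, ?_⟩
      · obtain ⟨x⟩ := (hconn i).nonempty
        exact ⟨x.1, x.2⟩
      · intro u hu' v hv'
        obtain ⟨p⟩ := (hconn i).preconnected ⟨u, hu'⟩ ⟨v, hv'⟩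
        exact exists_sgraph_walk p
    · refine ⟨fun e => ⟨⟨s(pu e, pv e), G.mem_edgeSet.mpr (hadj e)⟩, e.2⟩, ?_, ?_⟩
      · intro e1 e2 heq
        have heq' : ((⟨⟨s(pu e1, pv e1), G.mem_edgeSet.mpr (hadj e1)⟩, e1.2⟩ :
            G.edgeSet × Bool)) = ⟨⟨s(pu e2, pv e2), G.mem_edgeSet.mpr (hadj e2)⟩, e2.2⟩ := heq
        have h1 : s(pu e1, pv e1) = s(pu e2, pv e2) :=
          congrArg (fun x : G.edgeSet × Bool => (x.1 : Sym2 V)) heq'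
        have h2 : e1.2 = e2.2 := by injection heq'
        have hfst : (e1.1 : Sym2 (Fin k)) = (e2.1 : Sym2 (Fin k)) := by
          rw [Sym2.eq_iff] at h1
          rcases h1 with ⟨ha, hb⟩ | ⟨ha, hb⟩
          · have hii : pi e1 = pi e2 :=
              mem_eq_of_pairwise_disjoint hdisj (hu e1) (ha ▸ hu e2)
            have hjj : pj e1 = pj e2 :=
              mem_eq_of_pairwise_disjoint hdisj (hv e1) (hb ▸ hv e2)
            rw [hij e1, hij e2, hii, hjj]
          · have hii : pi e1 = pj e2 :=
              mem_eq_of_pairwise_disjoint hdisj (hu e1) (ha ▸ hv e2)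
            have hjj : pj e1 = pi e2 :=
              mem_eq_of_pairwise_disjoint hdisj (hv e1) (hb ▸ hu e2)
            rw [hij e1, hij e2, hii, hjj, Sym2.eq_swap]
        exact Prod.ext (Subtype.ext hfst) h2
      · intro e x y hxy
        constructor
        · simp [SGraph.switch, SimpleGraph.tildeS, tildeK]
        · have hxy' : s(x, y) = s(pi e, pj e) := by
            rw [← hxy]; exact hij e
          rw [Sym2.eq_iff] at hxy'
          rcases hxy' with ⟨rfl, rfl⟩ | ⟨rfl, rfl⟩
          · exact ⟨pu e, pv e, rfl, hu e, hv e⟩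
          · exact ⟨pv e, pu e, Sym2.eq_swap, hv e, hu e⟩
end

section
/- For every t ≥ 2, f_o(t) ≤ f_eo(t) ≤ 2f(t), where f(t) is the smallest integer such that every K_t-minor-free graph is f(t)-colorable, f_o(t) the smallest integer such that every odd-K_t-minor-free graph is f_o(t)-colorable, and f_eo(t) the smallest integer such that every even-odd-K_t-minor-free graph is f_eo(t)-colorable. -/
open SGraph

/-- `f_eo(t)`: the smallest `n` such that every even-odd-`K_t`-minor-free graph is
`n`-colorable. -/
noncomputable def feo (t : ℕ) : ℕ :=
  sInf {n : ℕ | ∀ (m : ℕ) (G : SimpleGraph (Fin m)),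
    ¬ G.HasEvenOddCliqueMinor t → G.Colorable n}

/-- `f(t)`: the smallest `n` such that every `K_t`-minor-free graph is `n`-colorable. -/
noncomputable def fHadwiger (t : ℕ) : ℕ :=
  sInf {n : ℕ | ∀ (m : ℕ) (G : SimpleGraph (Fin m)),
    ¬ G.HasCliqueMinor t → G.Colorable n}

/-- `f_o(t)`: the smallest `n` such that every odd-`K_t`-minor-free graph is
`n`-colorable. -/
noncomputable def fo (t : ℕ) : ℕ :=
  sInf {n : ℕ | ∀ (m : ℕ) (G : SimpleGraph (Fin m)),
    ¬ G.HasOddCliqueMinor t → G.Colorable n}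

/-! ### Auxiliary machinery for STATEMENT 13 -/

namespace EOAux

open SimpleGraph


lemma xor_ne_xor (a b c : Bool) : xor a c ≠ xor b c ↔ a ≠ b := by
  cases a <;> cases b <;> cases c <;> simp

lemma bool_eq_of_ne_ne (a b d : Bool) (h1 : a ≠ b) (h2 : a ≠ d) : b = d := by
  cases a <;> cases b <;> cases d <;> simp_all

/-- The quotient graph of a partition. -/
def quot {m k : ℕ} (G : SimpleGraph (Fin m)) (π : Fin m → Fin k) : SimpleGraph (Fin k) where
  Adj i j := i ≠ j ∧ ∃ u v, π u = i ∧ π v = j ∧ G.Adj u v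
  symm := by
    refine ⟨?_⟩; rintro i j ⟨hne, u, v, hu, hv, hadj⟩
    exact ⟨hne.symm, v, u, hv, hu, hadj.symm⟩
  loopless := by refine ⟨?_⟩; rintro i ⟨hne, -⟩; exact hne rfl

theorem exists_spanning_tree {α : Type} [Fintype α] (Γ : SimpleGraph α) (h : Γ.Connected) :
    ∃ T : SimpleGraph α, T ≤ Γ ∧ T.Connected ∧ T.IsAcyclic := by
  classical
  suffices H : ∀ (N : ℕ) (Γ : SimpleGraph α), Γ.edgeSet.ncard ≤ N → Γ.Connected →
      ∃ T : SimpleGraph α, T ≤ Γ ∧ T.Connected ∧ T.IsAcyclic from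
    H Γ.edgeSet.ncard Γ le_rfl h
  intro N
  induction N with
  | zero =>
    intro Γ hcard hconn
    by_cases hac : Γ.IsAcyclic
    · exact ⟨Γ, le_rfl, hconn, hac⟩
    · exfalso
      rw [SimpleGraph.IsAcyclic] at hac
      push_neg at hac
      obtain ⟨v, c, hc⟩ := hac
      have h3 := hc.three_le_length
      have hne : c.edges ≠ [] := by
        intro hnil
        have := c.length_edges
        rw [hnil] at this
        simp at this
        omega
      obtain ⟨e, he⟩ := List.exists_mem_of_ne_nil _ hne
      have hmem : e ∈ Γ.edgeSet := c.edges_subset_edgeSet he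
      have : Γ.edgeSet.ncard = 0 := Nat.le_zero.mp hcard
      rw [Set.ncard_eq_zero (Set.toFinite _)] at this
      rw [this] at hmem
      exact hmem
  | succ N ih =>
    intro Γ hcard hconn
    by_cases hac : Γ.IsAcyclic
    · exact ⟨Γ, le_rfl, hconn, hac⟩
    rw [SimpleGraph.IsAcyclic] at hac
    push_neg at hac
    obtain ⟨v, c, hc⟩ := hac
    have h3 := hc.three_le_length
    have hne : c.edges ≠ [] := by
      intro hnil
      have := c.length_edges
      rw [hnil] at this
      simp at this
      omega
    obtain ⟨e, he⟩ := List.exists_mem_of_ne_nil _ hne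
    revert he
    induction e using Sym2.ind with
    | _ x y =>
    intro he
    have hadj : Γ.Adj x y := c.adj_of_mem_edges he
    have hreach : (Γ \ SimpleGraph.fromEdgeSet {s(x, y)}).Reachable x y :=
      ((adj_and_reachable_delete_edges_iff_exists_cycle (G:=Γ)).mpr ⟨v, c, hc, he⟩).2
    set Γ' := Γ \ SimpleGraph.fromEdgeSet {s(x, y)} with hΓ'
    have hΓ'le : Γ' ≤ Γ := sdiff_le
    have transfer : ∀ a b : α, Γ.Reachable a b → Γ'.Reachable a b := by
      intro a b hr
      obtain ⟨w⟩ := hr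
      induction w with
      | nil => exact Reachable.refl _
      | @cons a c' b hadj' p ihp =>
        refine Reachable.trans ?_ ihp
        by_cases hcase : s(a, c') = s(x, y)
        · rw [Sym2.eq_iff] at hcase
          rcases hcase with ⟨rfl, rfl⟩ | ⟨rfl, rfl⟩
          · exact hreach
          · exact hreach.symm
        · refine SimpleGraph.Adj.reachable ?_
          rw [hΓ', SimpleGraph.sdiff_adj]
          exact ⟨hadj', by simp [SimpleGraph.fromEdgeSet_adj, hcase]⟩
    have hconn' : Γ'.Connected := by
      haveI : Nonempty α := hconn.nonempty
      exact ⟨fun a b => transfer a b (hconn.preconnected a b)⟩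
    have hsingle : ({s(x, y)} : Set (Sym2 α)) \ {e | e.IsDiag} = {s(x, y)} := by
      ext e
      simp only [Set.mem_diff, Set.mem_singleton_iff, Set.mem_setOf_eq]
      constructor
      · exact fun h => h.1
      · rintro rfl
        exact ⟨rfl, by simp [hadj.ne]⟩
    have hΓ'edge : Γ'.edgeSet = Γ.edgeSet \ {s(x, y)} := by
      rw [hΓ', SimpleGraph.edgeSet_sdiff, SimpleGraph.edgeSet_fromEdgeSet, Sym2.diagSet, hsingle]
    have hxy_mem : s(x, y) ∈ Γ.edgeSet := hadj
    have hss : Γ.edgeSet \ {s(x, y)} ⊂ Γ.edgeSet := by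
      rw [Set.ssubset_iff_subset_ne]
      refine ⟨Set.diff_subset, fun heq => ?_⟩
      have : s(x, y) ∈ Γ.edgeSet \ {s(x, y)} := heq.symm ▸ hxy_mem
      exact this.2 rfl
    have hlt : Γ'.edgeSet.ncard < Γ.edgeSet.ncard := by
      rw [hΓ'edge]
      exact Set.ncard_lt_ncard hss (Set.toFinite _)
    obtain ⟨T, hTle, hTconn, hTac⟩ := ih Γ' (by omega) hconn'
    exact ⟨T, le_trans hTle hΓ'le, hTconn, hTac⟩

theorem subgraph_exists_spanning_tree {V : Type} [Fintype V] {G : SimpleGraph V}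
    (H : G.Subgraph) (h : H.Connected) :
    ∃ T : G.Subgraph, T ≤ H ∧ T.verts = H.verts ∧ T.coe.IsTree := by
  classical
  haveI : Fintype ↥H.verts := (Set.toFinite H.verts).fintype
  obtain ⟨T', hle, hconn, hac⟩ := exists_spanning_tree H.coe h.coe
  refine ⟨⟨H.verts, fun u v => ∃ (hu : u ∈ H.verts) (hv : v ∈ H.verts), T'.Adj ⟨u, hu⟩ ⟨v, hv⟩,
    ?_, ?_, ?_⟩, ⟨le_rfl, ?_⟩, rfl, ?_⟩
  · rintro u v ⟨hu, hv, ha⟩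
    exact H.coe_adj_sub _ _ (hle ha)
  · rintro u v ⟨hu, hv, ha⟩
    exact hu
  · refine ⟨?_⟩; rintro u v ⟨hu, hv, ha⟩
    exact ⟨hv, hu, ha.symm⟩
  · rintro u v ⟨hu, hv, ha⟩
    exact hle ha
  · have hcoe :
        (Subgraph.mk H.verts
          (fun u v => ∃ (hu : u ∈ H.verts) (hv : v ∈ H.verts), T'.Adj ⟨u, hu⟩ ⟨v, hv⟩)
          (fun {u v} h' => H.coe_adj_sub _ _ (hle h'.2.2))
          (fun {u v} h' => h'.1)
          ⟨fun u v h' => ⟨h'.2.1, h'.1, h'.2.2.symm⟩⟩ : G.Subgraph).coe = T' := by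
      ext ⟨u, hu⟩ ⟨v, hv⟩
      constructor
      · rintro ⟨hu', hv', ha⟩
        convert ha using 2 <;> exact Subtype.ext rfl
      · intro ha
        exact ⟨hu, hv, ha⟩
    rw [hcoe]
    exact ⟨hconn, hac⟩

lemma induce_singleton_connected {V : Type} (G : SimpleGraph V) (v : V) :
    ((⊤ : G.Subgraph).induce {v}).Connected := by
  rw [Subgraph.connected_iff]
  refine ⟨⟨?_⟩, ⟨v, rfl⟩⟩
  rintro ⟨a, ha⟩ ⟨b, hb⟩
  simp only [Subgraph.induce_verts, Set.mem_singleton_iff] at ha hb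
  subst ha; subst hb; rfl

lemma induce_insert_connected {V : Type} {G : SimpleGraph V} {P : Set V}
    (hconn : ((⊤ : G.Subgraph).induce P).Connected) {v u₀ : V} (hu₀ : u₀ ∈ P)
    (hadj : G.Adj v u₀) :
    ((⊤ : G.Subgraph).induce (insert v P)).Connected := by
  have h1 : (((⊤ : G.Subgraph).induce P) ⊔ G.subgraphOfAdj hadj).Connected := by
    refine Subgraph.connected_sup hconn.preconnected (Subgraph.subgraphOfAdj_connected hadj).preconnected ⟨u₀, ?_⟩
    rw [Subgraph.verts_inf]
    exact ⟨hu₀, by simp⟩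
  have hveq : (((⊤ : G.Subgraph).induce P) ⊔ G.subgraphOfAdj hadj).verts
      = insert v P := by
    rw [Subgraph.verts_sup, Subgraph.induce_verts, subgraphOfAdj_verts]
    ext x
    simp only [Set.mem_union, Set.mem_insert_iff, Set.mem_singleton_iff]
    constructor
    · rintro (hx | rfl | rfl)
      · exact Or.inr hx
      · exact Or.inl rfl
      · exact Or.inr hu₀
    · rintro (rfl | hx)
      · exact Or.inr (Or.inl rfl)
      · exact Or.inl hx
  refine h1.mono ⟨?_, ?_⟩ ?_
  · rw [hveq, Subgraph.induce_verts]
  · intro a b hab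
    rw [Subgraph.sup_adj] at hab
    rcases hab with hab | hab
    · rw [Subgraph.induce_adj] at hab
      rw [Subgraph.induce_adj]
      exact ⟨Set.mem_insert_of_mem _ hab.1, Set.mem_insert_of_mem _ hab.2.1, hab.2.2⟩
    · rw [subgraphOfAdj_adj] at hab
      rw [Sym2.eq_iff] at hab
      rw [Subgraph.induce_adj]
      rcases hab with ⟨rfl, rfl⟩ | ⟨rfl, rfl⟩
      · exact ⟨Set.mem_insert _ _, Set.mem_insert_of_mem _ hu₀, by simpa using hadj⟩
      · exact ⟨Set.mem_insert_of_mem _ hu₀, Set.mem_insert _ _, by simpa using hadj.symm⟩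
  · rw [hveq, Subgraph.induce_verts]

/-- a good piece: nonempty, connected, and inducing a bipartite graph -/
def GoodP {m : ℕ} (G : SimpleGraph (Fin m)) (P : Finset (Fin m)) : Prop :=
  P.Nonempty ∧ ((⊤ : G.Subgraph).induce ↑P).Connected ∧
    ∃ d : Fin m → Bool, ∀ u ∈ P, ∀ v ∈ P, G.Adj u v → d u ≠ d v

lemma goodP_singleton {m : ℕ} (G : SimpleGraph (Fin m)) (v : Fin m) : GoodP G {v} := by
  refine ⟨⟨v, Finset.mem_singleton_self v⟩, ?_, fun _ => false, ?_⟩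
  · rw [Finset.coe_singleton]
    exact induce_singleton_connected G v
  · intro u hu w hw hadj
    rw [Finset.mem_singleton] at hu hw
    subst hu; subst hw
    exact absurd hadj (G.loopless.irrefl _)

lemma exists_pick {m : ℕ} (G : SimpleGraph (Fin m)) (R : Finset (Fin m)) (hR : R.Nonempty) :
    ∃ P, P ⊆ R ∧ GoodP G P ∧ ∀ X ⊆ R, GoodP G X → X.card ≤ P.card := by
  classical
  obtain ⟨v, hv⟩ := hR
  have hne : (R.powerset.filter (fun P => GoodP G P)).Nonempty := by
    refine ⟨{v}, ?_⟩
    rw [Finset.mem_filter, Finset.mem_powerset]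
    exact ⟨Finset.singleton_subset_iff.mpr hv, goodP_singleton G v⟩
  obtain ⟨P, hP, hmax⟩ := Finset.exists_max_image _ Finset.card hne
  rw [Finset.mem_filter, Finset.mem_powerset] at hP
  refine ⟨P, hP.1, hP.2, fun X hX hGX => hmax X ?_⟩
  rw [Finset.mem_filter, Finset.mem_powerset]
  exact ⟨hX, hGX⟩

theorem exists_partition (m : ℕ) (G : SimpleGraph (Fin m)) :
    ∃ (k : ℕ) (π : Fin m → Fin k) (δ : Fin m → Bool),
      (∀ u v, G.Adj u v → π u = π v → δ u ≠ δ v) ∧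
      (∀ i : Fin k, ((⊤ : G.Subgraph).induce {v | π v = i}).Connected) ∧
      (∀ v u₀, π u₀ < π v → G.Adj v u₀ →
        ∃ u u', π u = π u₀ ∧ π u' = π u₀ ∧ G.Adj v u ∧ G.Adj v u' ∧ δ u ≠ δ u') := by
  classical
  set pick : Finset (Fin m) → Finset (Fin m) := fun R =>
    if h : R.Nonempty then (exists_pick G R h).choose else ∅ with hpick
  have pick_sub : ∀ R (h : R.Nonempty), pick R ⊆ R := by
    intro R h
    simp only [hpick, dif_pos h]
    exact (exists_pick G R h).choose_spec.1
  have pick_good : ∀ R (h : R.Nonempty), GoodP G (pick R) := by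
    intro R h
    simp only [hpick, dif_pos h]
    exact (exists_pick G R h).choose_spec.2.1
  have pick_max : ∀ R (h : R.Nonempty), ∀ X ⊆ R, GoodP G X → X.card ≤ (pick R).card := by
    intro R h
    simp only [hpick, dif_pos h]
    exact (exists_pick G R h).choose_spec.2.2
  set res : ℕ → Finset (Fin m) :=
    fun n => Nat.rec Finset.univ (fun _ ih => ih \ pick ih) n with hres
  have res_succ : ∀ n, res (n + 1) = res n \ pick (res n) := fun n => rfl
  have res_anti : ∀ n, res (n + 1) ⊆ res n := by
    intro n; rw [res_succ]; exact Finset.sdiff_subset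
  have res_anti' : ∀ a b, a ≤ b → res b ⊆ res a := by
    intro a b hab
    induction hab with
    | refl => exact subset_rfl
    | @step c hc ih => exact (res_anti c).trans ih
  set part : ℕ → Finset (Fin m) := fun n => pick (res n) with hpart
  have res_card : ∀ n, (res n).card ≤ m - n := by
    intro n
    induction n with
    | zero => simp [hres]
    | succ n ih =>
      by_cases h : (res n).Nonempty
      · have h1 : (pick (res n)).Nonempty := (pick_good _ h).1
        have h2 : pick (res n) ⊆ res n := pick_sub _ h
        have hlt : (res (n + 1)).card < (res n).card := by
          rw [res_succ, Finset.card_sdiff_of_subset h2]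
          have h3 := Finset.card_pos.mpr h1
          have h4 := Finset.card_le_card h2
          omega
        omega
      · rw [Finset.not_nonempty_iff_eq_empty] at h
        rw [res_succ, h]
        simp
  have hex : ∃ n, res n = ∅ := by
    refine ⟨m, Finset.card_eq_zero.mp ?_⟩
    have := res_card m
    omega
  set K := Nat.find hex with hK
  have resK : res K = ∅ := Nat.find_spec hex
  have res_ne : ∀ n < K, (res n).Nonempty := by
    intro n hn
    exact Finset.nonempty_iff_ne_empty.mpr (Nat.find_min hex hn)
  have exv : ∀ v : Fin m, ∃ n, v ∉ res n := by
    intro v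
    exact ⟨K, by rw [resK]; exact Finset.notMem_empty v⟩
  set st : Fin m → ℕ := fun v => Nat.find (exv v) - 1 with hst
  have hfind_pos : ∀ v, 0 < Nat.find (exv v) := by
    intro v
    rcases Nat.eq_zero_or_pos (Nat.find (exv v)) with h | h
    · exfalso
      have h0 := Nat.find_spec (exv v)
      rw [h] at h0
      exact h0 (by simp [hres])
    · exact h
  have st_mem : ∀ v, v ∈ part (st v) ∧ v ∈ res (st v) := by
    intro v
    have hpos := hfind_pos v
    have h1 : v ∈ res (st v) := by
      have := Nat.find_min (exv v) (show st v < Nat.find (exv v) by simp only [hst]; omega)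
      simpa using this
    have h2 : v ∉ res (st v + 1) := by
      have heq : st v + 1 = Nat.find (exv v) := by simp only [hst]; omega
      rw [heq]
      exact Nat.find_spec (exv v)
    rw [res_succ] at h2
    have : v ∈ pick (res (st v)) := by
      by_contra hnp
      exact h2 (Finset.mem_sdiff.mpr ⟨h1, hnp⟩)
    exact ⟨this, h1⟩
  have st_unique : ∀ v n, v ∈ part n → st v = n := by
    intro v n hv
    by_cases hR : (res n).Nonempty
    · have hvres : v ∈ res n := pick_sub _ hR hv
      have h2 : v ∉ res (n + 1) := by
        rw [res_succ]
        intro hmem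
        exact (Finset.mem_sdiff.mp hmem).2 hv
      have hle : Nat.find (exv v) ≤ n + 1 := Nat.find_le h2
      have hgt : n < Nat.find (exv v) := by
        rw [Nat.lt_find_iff]
        intro k hk hnot
        exact hnot (res_anti' k n hk hvres)
      simp only [hst]
      omega
    · exfalso
      rw [Finset.not_nonempty_iff_eq_empty] at hR
      have : pick (res n) = ∅ := by
        simp only [hpick, hR]
        rw [dif_neg]
        simp
      have hv' : v ∈ pick (res n) := hv
      rw [this] at hv'
      exact Finset.notMem_empty v hv'
  have stK : ∀ v, st v < K := by
    intro v
    by_contra h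
    push_neg at h
    have := res_anti' K (st v) h (st_mem v).2
    rw [resK] at this
    exact Finset.notMem_empty v this
  have part_good : ∀ n, n < K → GoodP G (part n) := fun n hn => pick_good _ (res_ne n hn)
  set dfun : ℕ → (Fin m → Bool) := fun n =>
    if h : GoodP G (part n) then Classical.choose h.2.2 else (fun _ => false) with hdfun
  have dfun_spec : ∀ n, n < K → ∀ u ∈ part n, ∀ v ∈ part n, G.Adj u v → dfun n u ≠ dfun n v := by
    intro n hn
    have hg := part_good n hn
    simp only [hdfun, dif_pos hg]
    exact Classical.choose_spec hg.2.2
  set δ : Fin m → Bool := fun v => dfun (st v) v with hδ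
  have δ_part : ∀ n, n < K → ∀ u ∈ part n, ∀ v ∈ part n, G.Adj u v → δ u ≠ δ v := by
    intro n hn u hu v hv hadj
    have h1 : st u = n := st_unique u n hu
    have h2 : st v = n := st_unique v n hv
    simp only [hδ, h1, h2]
    exact dfun_spec n hn u hu v hv hadj
  refine ⟨K, fun v => ⟨st v, stK v⟩, δ, ?_, ?_, ?_⟩
  · -- P1
    intro u v hadj hpi
    have h : st u = st v := congrArg Fin.val hpi
    have hn := stK u
    exact δ_part (st u) hn u (st_mem u).1 v (by rw [h]; exact (st_mem v).1) hadj
  · -- P2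
    intro i
    have hset : {v : Fin m | (⟨st v, stK v⟩ : Fin K) = i} = ↑(part i.1) := by
      ext v
      simp only [Set.mem_setOf_eq, Finset.coe_mem, Finset.mem_coe]
      constructor
      · intro hv
        have : st v = i.1 := by
          have := congrArg Fin.val hv
          simpa using this
        rw [← this]
        exact (st_mem v).1
      · intro hv
        exact Fin.ext (st_unique v i.1 hv)
    rw [hset]
    exact (part_good i.1 i.2).2.1
  · -- P3
    intro w u₀ hlt hadj
    have hlt' : st u₀ < st w := hlt
    have hn₀K : st u₀ < K := lt_trans hlt' (stK w)
    have hvres : w ∈ res (st u₀) := res_anti' (st u₀) (st w) (le_of_lt hlt') (st_mem w).2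
    have hvnp : w ∉ part (st u₀) := by
      intro hmem
      have := st_unique w (st u₀) hmem
      omega
    by_contra hcon
    push_neg at hcon
    have hu₀mem : u₀ ∈ part (st u₀) := (st_mem u₀).1
    have hall : ∀ u ∈ part (st u₀), G.Adj w u → δ u = δ u₀ := by
      intro u hu hadj'
      exact hcon u u₀ (Fin.ext (st_unique u (st u₀) hu)) rfl hadj' hadj
    -- the enlarged set is good, contradicting maximality
    have hXsub : insert w (part (st u₀)) ⊆ res (st u₀) :=
      Finset.insert_subset hvres (pick_sub _ (res_ne (st u₀) hn₀K))
    have hXgood : GoodP G (insert w (part (st u₀))) := by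
      refine ⟨Finset.insert_nonempty _ _, ?_, ?_⟩
      · rw [Finset.coe_insert]
        exact induce_insert_connected (part_good (st u₀) hn₀K).2.1
          (Finset.mem_coe.mpr hu₀mem) hadj
      · refine ⟨fun x => if x = w then !(δ u₀) else δ x, ?_⟩
        intro a ha b hb hab
        rw [Finset.mem_insert] at ha hb
        rcases ha with rfl | ha <;> rcases hb with rfl | hb
        · exact absurd hab (G.loopless.irrefl _)
        · have hbv : b ≠ a := fun h => hvnp (h ▸ hb)
          simp only [if_pos rfl, if_neg hbv]
          rw [hall b hb hab]
          simp
        · have hav : a ≠ b := fun h => hvnp (h ▸ ha)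
          simp only [if_pos rfl, if_neg hav]
          rw [hall a ha hab.symm]
          simp
        · have hav : a ≠ w := fun h => hvnp (h ▸ ha)
          have hbv : b ≠ w := fun h => hvnp (h ▸ hb)
          simp only [if_neg hav, if_neg hbv]
          exact δ_part (st u₀) hn₀K a ha b hb hab
    have hcard := pick_max (res (st u₀)) (res_ne (st u₀) hn₀K) _ hXsub hXgood
    rw [Finset.card_insert_of_notMem hvnp] at hcard
    have hpe : (part (st u₀)).card = (pick (res (st u₀))).card := rfl
    omega

lemma subgraph_exit {α : Type} {Γ : SimpleGraph α} (W : Γ.Subgraph) (hW : W.coe.Connected)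
    {x y : α} (hx : x ∈ W.verts) (hy : y ∈ W.verts) {A : Set α} (hxA : x ∈ A) (hyA : y ∉ A) :
    ∃ i j, i ∈ A ∧ j ∈ W.verts ∧ j ∉ A ∧ W.Adj i j := by
  obtain ⟨p⟩ := hW.preconnected ⟨x, hx⟩ ⟨y, hy⟩
  suffices haux : ∀ (a b : ↥W.verts) (p : W.coe.Walk a b), (a : α) ∈ A → (b : α) ∉ A →
      ∃ i j, i ∈ A ∧ j ∈ W.verts ∧ j ∉ A ∧ W.Adj i j from
    haux _ _ p hxA hyA
  intro a b p
  induction p with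
  | nil => exact fun h1 h2 => absurd h1 h2
  | @cons a' c' b' hadj p ih =>
    intro ha hb
    by_cases hc : (c' : α) ∈ A
    · exact ih hc hb
    · exact ⟨a', c', ha, c'.2, hc, hadj⟩

lemma glue {m k : ℕ} {G : SimpleGraph (Fin m)} {π : Fin m → Fin k} {δ : Fin m → Bool}
    (h1 : ∀ u v, G.Adj u v → π u = π v → δ u ≠ δ v)
    (h2 : ∀ i : Fin k, ((⊤ : G.Subgraph).induce {v | π v = i}).Connected)
    (W : (quot G π).Subgraph) (hW : W.coe.Connected) :
    ∃ (H : G.Subgraph) (ε : Fin k → Bool),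
      H.verts = {v | π v ∈ W.verts} ∧ H.Connected ∧
      (∀ u v, H.Adj u v → xor (δ u) (ε (π u)) ≠ xor (δ v) (ε (π v))) := by
  classical
  obtain ⟨i₀, hi₀⟩ : W.verts.Nonempty := (Subgraph.connected_iff'.mpr hW).nonempty
  suffices haux : ∀ (d : ℕ) (A : Set (Fin k)), A ⊆ W.verts → A.Nonempty →
      (W.verts \ A).ncard ≤ d →
      (∃ (H : G.Subgraph) (ε : Fin k → Bool),
        H.verts = {v | π v ∈ A} ∧ H.Connected ∧
        (∀ u v, H.Adj u v → xor (δ u) (ε (π u)) ≠ xor (δ v) (ε (π v)))) →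
      (∃ (H : G.Subgraph) (ε : Fin k → Bool),
        H.verts = {v | π v ∈ W.verts} ∧ H.Connected ∧
        (∀ u v, H.Adj u v → xor (δ u) (ε (π u)) ≠ xor (δ v) (ε (π v)))) by
    refine haux (W.verts \ {i₀}).ncard {i₀} (by simpa using hi₀) ⟨i₀, rfl⟩ le_rfl ?_
    refine ⟨(⊤ : G.Subgraph).induce {v | π v = i₀}, fun _ => false, ?_, h2 i₀, ?_⟩
    · rw [Subgraph.induce_verts]
      ext v
      simp
    · intro u v huv
      rw [Subgraph.induce_adj] at huv
      obtain ⟨hu, hv, huv'⟩ := huv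
      rw [Set.mem_setOf_eq] at hu hv
      have := h1 u v (by simpa using huv') (hu.trans hv.symm)
      simpa using this
  intro d
  induction d with
  | zero =>
    intro A hsub _hne hcard hInv
    have hdiff : W.verts \ A = ∅ := by
      rw [← Set.ncard_eq_zero (Set.toFinite (W.verts \ A))]
      omega
    have hAeq : A = W.verts := Set.Subset.antisymm hsub (Set.diff_eq_empty.mp hdiff)
    rw [hAeq] at hInv
    exact hInv
  | succ d ih =>
    intro A hsub hne hcard hInv
    by_cases hfull : W.verts ⊆ A
    · have hAeq : A = W.verts := Set.Subset.antisymm hsub hfull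
      rw [hAeq] at hInv
      exact hInv
    · obtain ⟨x, hx⟩ := hne
      rw [Set.not_subset] at hfull
      obtain ⟨y, hy, hynA⟩ := hfull
      obtain ⟨i, j, hiA, hjW, hjnA, hWadj⟩ := subgraph_exit W hW (hsub hx) hy hx hynA
      have hQadj : (quot G π).Adj i j := hWadj.adj_sub
      obtain ⟨hne', u₀, v₀, hu₀, hv₀, hadj₀⟩ := hQadj
      obtain ⟨H, ε, hHv, hHc, hHp⟩ := hInv
      have hij : i ≠ j := fun h => hjnA (h ▸ hiA)
      refine ih (insert j A) (Set.insert_subset hjW hsub) ⟨x, Set.mem_insert_of_mem _ hx⟩ ?_ ?_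
      · have hss : W.verts \ insert j A ⊂ W.verts \ A := by
          constructor
          · exact Set.diff_subset_diff_right (Set.subset_insert _ _)
          · intro hcon
            have : j ∈ W.verts \ insert j A := hcon ⟨hjW, hjnA⟩
            exact this.2 (Set.mem_insert _ _)
        have := Set.ncard_lt_ncard hss (Set.toFinite _)
        omega
      · refine ⟨H ⊔ G.subgraphOfAdj hadj₀ ⊔ (⊤ : G.Subgraph).induce {v | π v = j},
          Function.update ε j (xor (δ v₀) (!(xor (δ u₀) (ε i)))), ?_, ?_, ?_⟩
        · rw [Subgraph.verts_sup, Subgraph.verts_sup, hHv, subgraphOfAdj_verts,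
            Subgraph.induce_verts]
          ext w
          simp only [Set.mem_union, Set.mem_setOf_eq, Set.mem_insert_iff,
            Set.mem_singleton_iff]
          constructor
          · rintro ((hw | rfl | rfl) | hw)
            · exact Or.inr hw
            · exact Or.inr (hu₀ ▸ hiA)
            · exact Or.inl hv₀
            · exact Or.inl hw
          · rintro (hw | hw)
            · exact Or.inr hw
            · exact Or.inl (Or.inl hw)
        · have hc1 : (H ⊔ G.subgraphOfAdj hadj₀).Connected := by
            refine Subgraph.connected_sup hHc.preconnected (Subgraph.subgraphOfAdj_connected hadj₀).preconnected ⟨u₀, ?_⟩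
            rw [Subgraph.verts_inf]
            refine ⟨?_, by simp⟩
            rw [hHv]
            exact Set.mem_setOf_eq ▸ (hu₀ ▸ hiA)
          refine Subgraph.connected_sup hc1.preconnected (h2 j).preconnected ⟨v₀, ?_⟩
          rw [Subgraph.verts_inf, Subgraph.verts_sup, Subgraph.induce_verts]
          exact ⟨Or.inr (by simp), hv₀⟩
        · intro u v huv
          rw [Subgraph.sup_adj, Subgraph.sup_adj] at huv
          have hupd : ∀ w : Fin m, π w ∈ A →
              Function.update ε j (xor (δ v₀) (!(xor (δ u₀) (ε i)))) (π w) = ε (π w) := by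
            intro w hw
            have : π w ≠ j := fun h => hjnA (h ▸ hw)
            rw [Function.update_of_ne this]
          have hbval : xor (δ v₀) (Function.update ε j (xor (δ v₀) (!(xor (δ u₀) (ε i)))) (π v₀))
              = !(xor (δ u₀) (ε i)) := by
            rw [hv₀, Function.update_self]
            cases (δ v₀) <;> cases (xor (δ u₀) (ε i)) <;> rfl
          have huval : xor (δ u₀) (Function.update ε j (xor (δ v₀) (!(xor (δ u₀) (ε i)))) (π u₀))
              = xor (δ u₀) (ε i) := by
            rw [hu₀, Function.update_of_ne hij]
          rcases huv with (huv | huv) | huv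
          · have hu' : π u ∈ A := by
              have := H.edge_vert huv
              rw [hHv] at this
              exact this
            have hv' : π v ∈ A := by
              have := H.edge_vert huv.symm
              rw [hHv] at this
              exact this
            rw [hupd u hu', hupd v hv']
            exact hHp u v huv
          · rw [subgraphOfAdj_adj, Sym2.eq_iff] at huv
            rcases huv with ⟨rfl, rfl⟩ | ⟨rfl, rfl⟩
            · rw [huval, hbval]
              cases xor (δ u₀) (ε i) <;> simp
            · rw [huval, hbval]
              cases xor (δ u₀) (ε i) <;> simp
          · rw [Subgraph.induce_adj] at huv
            obtain ⟨hu', hv', huv'⟩ := huv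
            rw [Set.mem_setOf_eq] at hu' hv'
            rw [hu', hv', Function.update_self]
            rw [xor_ne_xor]
            exact h1 u v (by simpa using huv') (hu'.trans hv'.symm)

theorem main_imp {m k : ℕ} {G : SimpleGraph (Fin m)} {π : Fin m → Fin k} {δ : Fin m → Bool}
    (h1 : ∀ u v, G.Adj u v → π u = π v → δ u ≠ δ v)
    (h2 : ∀ i : Fin k, ((⊤ : G.Subgraph).induce {v | π v = i}).Connected)
    (h3 : ∀ v u₀, π u₀ < π v → G.Adj v u₀ →
        ∃ u u', π u = π u₀ ∧ π u' = π u₀ ∧ G.Adj v u ∧ G.Adj v u' ∧ δ u ≠ δ u')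
    {t : ℕ} (hQ : (quot G π).HasCliqueMinor t) :
    G.HasEvenOddCliqueMinor t := by
  classical
  obtain ⟨TQ, hconn, hdisj, hpairs⟩ := hQ
  have hglue : ∀ a : Fin t, ∃ (H : G.Subgraph) (ε : Fin k → Bool),
      H.verts = {v | π v ∈ (TQ a).verts} ∧ H.Connected ∧
      (∀ u v, H.Adj u v → xor (δ u) (ε (π u)) ≠ xor (δ v) (ε (π v))) :=
    fun a => glue h1 h2 (TQ a) (hconn a)
  choose Hfun εfun hHv hHc hHp using hglue
  have htree : ∀ a, ∃ T : G.Subgraph, T ≤ Hfun a ∧ T.verts = (Hfun a).verts ∧ T.coe.IsTree :=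
    fun a => subgraph_exists_spanning_tree (Hfun a) (hHc a)
  choose Tfun hTle hTv hTtree using htree
  set c : Fin m → Bool := fun v =>
    if h : ∃ a, π v ∈ (TQ a).verts then xor (δ v) (εfun h.choose (π v)) else δ v with hc
  have hcval : ∀ (a : Fin t) (v : Fin m), π v ∈ (TQ a).verts →
      c v = xor (δ v) (εfun a (π v)) := by
    intro a v hv
    have hex : ∃ a, π v ∈ (TQ a).verts := ⟨a, hv⟩
    have hch : hex.choose = a := by
      by_contra hne
      exact Set.disjoint_left.mp (hdisj hne) hex.choose_spec hv
    simp only [hc, dif_pos hex, hch]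
  have hmemT : ∀ (a : Fin t) (v : Fin m), π v ∈ (TQ a).verts → v ∈ (Tfun a).verts := by
    intro a v hv
    rw [hTv, hHv]
    exact hv
  refine ⟨c, Tfun, fun a => hTtree a, ?_, ?_, ?_⟩
  · intro a b hab
    rw [hTv, hTv, hHv, hHv]
    rw [Set.disjoint_left]
    intro v hv hv'
    exact Set.disjoint_left.mp (hdisj hab) hv hv'
  · intro a u v huv
    have hH : (Hfun a).Adj u v := (hTle a).2 huv
    have hu := (Hfun a).edge_vert hH
    have hv' := (Hfun a).edge_vert hH.symm
    rw [hHv] at hu hv'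
    rw [hcval a u hu, hcval a v hv']
    exact hHp a u v hH
  · intro a b hab
    obtain ⟨i, j, hQadj, hi, hj⟩ := hpairs a b hab
    obtain ⟨hne', u₀, v₀, hu₀, hv₀, hadj₀⟩ := hQadj
    have hu₀a : u₀ ∈ (Tfun a).verts := hmemT a u₀ (by rw [hu₀]; exact hi)
    have hv₀b : v₀ ∈ (Tfun b).verts := hmemT b v₀ (by rw [hv₀]; exact hj)
    rcases lt_or_gt_of_ne hne' with hlt | hlt
    · -- i < j : the later part is on the `b` side
      obtain ⟨u, u', hπu, hπu', hadju, hadju', hδ⟩ :=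
        h3 v₀ u₀ (by rw [hu₀, hv₀]; exact hlt) hadj₀.symm
      have hua : u ∈ (Tfun a).verts := hmemT a u (by rw [hπu, hu₀]; exact hi)
      have hu'a : u' ∈ (Tfun a).verts := hmemT a u' (by rw [hπu', hu₀]; exact hi)
      have hcu : c u = xor (δ u) (εfun a (π u)) := hcval a u (by rw [hπu, hu₀]; exact hi)
      have hcu' : c u' = xor (δ u') (εfun a (π u')) := hcval a u' (by rw [hπu', hu₀]; exact hi)
      have hcne : c u ≠ c u' := by
        rw [hcu, hcu', hπu, hπu']
        exact (xor_ne_xor _ _ _).mpr hδ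
      by_cases hcc : c u = c v₀
      · exact ⟨⟨u, v₀, hadju.symm, hua, hv₀b, hcc⟩,
          ⟨u', v₀, hadju'.symm, hu'a, hv₀b, fun h => hcne (hcc.trans h.symm)⟩⟩
      · refine ⟨⟨u', v₀, hadju'.symm, hu'a, hv₀b, ?_⟩, ⟨u, v₀, hadju.symm, hua, hv₀b, hcc⟩⟩
        exact bool_eq_of_ne_ne (c u) (c u') (c v₀) hcne hcc
    · -- j < i : the later part is on the `a` side
      obtain ⟨u, u', hπu, hπu', hadju, hadju', hδ⟩ :=
        h3 u₀ v₀ (by rw [hu₀, hv₀]; exact hlt) hadj₀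
      have hub : u ∈ (Tfun b).verts := hmemT b u (by rw [hπu, hv₀]; exact hj)
      have hu'b : u' ∈ (Tfun b).verts := hmemT b u' (by rw [hπu', hv₀]; exact hj)
      have hcu : c u = xor (δ u) (εfun b (π u)) := hcval b u (by rw [hπu, hv₀]; exact hj)
      have hcu' : c u' = xor (δ u') (εfun b (π u')) := hcval b u' (by rw [hπu', hv₀]; exact hj)
      have hcne : c u ≠ c u' := by
        rw [hcu, hcu', hπu, hπu']
        exact (xor_ne_xor _ _ _).mpr hδ
      by_cases hcc : c u₀ = c u
      · exact ⟨⟨u₀, u, hadju, hu₀a, hub, hcc⟩,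
          ⟨u₀, u', hadju', hu₀a, hu'b, fun h => hcne (hcc.symm.trans h)⟩⟩
      · refine ⟨⟨u₀, u', hadju', hu₀a, hu'b, ?_⟩, ⟨u₀, u, hadju, hu₀a, hub, hcc⟩⟩
        exact bool_eq_of_ne_ne (c u) (c u₀) (c u') (fun h => hcc h.symm) hcne

/-- KEY: if `n` colors suffice for `K_t`-minor-free graphs then `2n` colors
suffice for even-odd-`K_t`-minor-free graphs. -/
theorem key {t n : ℕ}
    (hn : ∀ (m : ℕ) (G : SimpleGraph (Fin m)), ¬ G.HasCliqueMinor t → G.Colorable n) :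
    ∀ (m : ℕ) (G : SimpleGraph (Fin m)), ¬ G.HasEvenOddCliqueMinor t → G.Colorable (2 * n) := by
  intro m G hG
  obtain ⟨k, π, δ, h1, h2, h3⟩ := exists_partition m G
  have hQfree : ¬ (quot G π).HasCliqueMinor t := fun h => hG (main_imp h1 h2 h3 h)
  obtain ⟨qc⟩ := hn k (quot G π) hQfree
  have C : G.Coloring (Fin n × Bool) := by
    refine Coloring.mk (fun v => (qc (π v), δ v)) ?_
    intro u v hadj hne
    by_cases hpi : π u = π v
    · exact h1 u v hadj hpi (by simpa [Prod.ext_iff, hpi] using hne)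
    · have : (quot G π).Adj (π u) (π v) := ⟨hpi, u, v, rfl, rfl, hadj⟩
      exact qc.valid this (by simpa [Prod.ext_iff] using congrArg Prod.fst hne)
  have := C.colorable
  simpa [Fintype.card_prod, Nat.mul_comm] using this

theorem evenOdd_imp_odd {V : Type} {G : SimpleGraph V} {t : ℕ}
    (h : G.HasEvenOddCliqueMinor t) : G.HasOddCliqueMinor t := by
  obtain ⟨c, T, htree, hdisj, hprop, hpairs⟩ := h
  exact ⟨c, T, htree, hdisj, hprop, fun i j hij => (hpairs i j hij).1⟩

theorem evenOdd_imp_clique {V : Type} {G : SimpleGraph V} {t : ℕ}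
    (h : G.HasEvenOddCliqueMinor t) : G.HasCliqueMinor t := by
  obtain ⟨c, T, htree, hdisj, hprop, hpairs⟩ := h
  refine ⟨T, fun i => (htree i).isConnected, hdisj, fun i j hij => ?_⟩
  obtain ⟨u, v, hadj, hu, hv, -⟩ := (hpairs i j hij).1
  exact ⟨u, v, hadj, hu, hv⟩

theorem odd_imp_clique {V : Type} {G : SimpleGraph V} {t : ℕ}
    (h : G.HasOddCliqueMinor t) : G.HasCliqueMinor t := by
  obtain ⟨c, T, htree, hdisj, hprop, hpairs⟩ := h
  refine ⟨T, fun i => (htree i).isConnected, hdisj, fun i j hij => ?_⟩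
  obtain ⟨u, v, hadj, hu, hv, -⟩ := hpairs i j hij
  exact ⟨u, v, hadj, hu, hv⟩

end EOAux

/-- for every `t ≥ 2`, `f_o(t) ≤ f_eo(t) ≤ 2 f(t)`. -/
theorem stmt13 (t : ℕ) (ht : 2 ≤ t) :
    fo t ≤ feo t ∧ feo t ≤ 2 * fHadwiger t := by
  classical
  set Seo : Set ℕ := {n : ℕ | ∀ (m : ℕ) (G : SimpleGraph (Fin m)),
    ¬ G.HasEvenOddCliqueMinor t → G.Colorable n} with hSeo
  set So : Set ℕ := {n : ℕ | ∀ (m : ℕ) (G : SimpleGraph (Fin m)),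
    ¬ G.HasOddCliqueMinor t → G.Colorable n} with hSo
  set Sf : Set ℕ := {n : ℕ | ∀ (m : ℕ) (G : SimpleGraph (Fin m)),
    ¬ G.HasCliqueMinor t → G.Colorable n} with hSf
  have hfo : fo t = sInf So := rfl
  have hfeo : feo t = sInf Seo := rfl
  have hfH : fHadwiger t = sInf Sf := rfl
  have sub1 : Seo ⊆ So := by
    intro n hn m G hG
    exact hn m G (fun h => hG (EOAux.evenOdd_imp_odd h))
  have sub2 : Seo ⊆ Sf := by
    intro n hn m G hG
    exact hn m G (fun h => hG (EOAux.evenOdd_imp_clique h))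
  have sub3 : So ⊆ Sf := by
    intro n hn m G hG
    exact hn m G (fun h => hG (EOAux.odd_imp_clique h))
  have key' : ∀ n ∈ Sf, 2 * n ∈ Seo := by
    intro n hn m G hG
    exact EOAux.key hn m G hG
  by_cases h : Seo.Nonempty
  · constructor
    · have hmem := Nat.sInf_mem h
      rw [hfo, hfeo]
      exact Nat.sInf_le (sub1 hmem)
    · have hf : Sf.Nonempty := ⟨_, sub2 (Nat.sInf_mem h)⟩
      have : 2 * sInf Sf ∈ Seo := key' _ (Nat.sInf_mem hf)
      rw [hfeo, hfH]
      exact Nat.sInf_le this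
  · have hSeoe : Seo = ∅ := Set.not_nonempty_iff_eq_empty.mp h
    have hSoe : So = ∅ := by
      rw [Set.eq_empty_iff_forall_notMem]
      intro n hn
      exact h ⟨2 * n, key' n (sub3 hn)⟩
    constructor
    · rw [hfo, hfeo, hSeoe, hSoe]
    · rw [hfeo, hSeoe, Nat.sInf_empty]
      exact Nat.zero_le _
end

section
/- For any graph H, the signed graph H̃ is a topological minor of a signed graph (G, σ) if and only if H̃ is a total topological minor of (G, σ). -/
open SGraph

lemma SGraph.switch_const_false {V : Type} (G : SGraph V) :
    G.switch (fun _ => false) = G := by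
  obtain ⟨E, ends, neg⟩ := G
  simp only [SGraph.switch, mk.injEq, heq_eq_eq, true_and]
  funext e
  induction ends e using Sym2.ind with
  | _ u v => simp

/-- for any graph `H`, the signed graph `H̃` is a topological minor of
`(G, σ)` iff it is a total topological minor of `(G, σ)`. -/
theorem stmt14 {V W : Type} (H : SimpleGraph W) (G : SGraph V) :
    H.tildeS.IsTopMinor G ↔ H.tildeS.IsTotalTopMinor G := by
  constructor
  · rintro ⟨s, φ, ep, hφ, hep, P, h1, h2, h3, h4, h5⟩
    -- the amount by which switching at `s` flips the sign of each edge
    set fl : H.tildeS.E → Bool := fun x =>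
      Sym2.lift ⟨fun u v => Bool.xor (s u) (s v), fun u v => Bool.xor_comm _ _⟩
        (H.tildeS.ends x) with hfl
    have hflfst : ∀ x y : H.tildeS.E, x.1 = y.1 → fl x = fl y := by
      rintro ⟨e, b⟩ ⟨e', b'⟩ h
      simp only at h
      simp [hfl, SimpleGraph.tildeS, h]
    set τ : H.tildeS.E → H.tildeS.E := fun x => (x.1, Bool.xor x.2 (fl x)) with hτ
    have hflτ : ∀ x, fl (τ x) = fl x := fun x => hflfst _ _ rfl
    have hττ : ∀ x, τ (τ x) = x := by
      intro x
      simp only [hτ]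
      rw [hflfst (x.1, Bool.xor x.2 (fl x)) x rfl]
      simp [Bool.xor_assoc]
      rfl
    have hτinj : Function.Injective τ := Function.LeftInverse.injective hττ
    have hends : ∀ x, H.tildeS.ends (τ x) = H.tildeS.ends x := fun x => rfl
    have hneg : ∀ x, (H.tildeS.switch s).neg x = Bool.xor (H.tildeS.neg x) (fl x) := by
      intro x; rfl
    refine ⟨φ, fun x => ep (τ x), hφ, ?_, fun x => P (τ x), fun x => h1 (τ x),
      ?_, fun x => h3 (τ x), ?_, ?_⟩
    · intro e
      have := hep (τ e)
      exact this
    · intro e f hef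
      exact h2 (τ e) (τ f) (fun h => hef (hτinj h))
    · intro e f hef
      exact h4 (τ e) (τ f) (fun h => hef (hτinj h))
    · intro e
      have := h5 (τ e)
      rw [this]
      show Bool.xor (H.tildeS.neg (τ e)) (fl (τ e)) = H.tildeS.neg e
      rw [hflτ]
      show Bool.xor (Bool.xor e.2 (fl e)) (fl e) = e.2
      simp [Bool.xor_assoc]
  · intro h
    exact ⟨fun _ => false, by rw [SGraph.switch_const_false]; exact h⟩
end
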